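/- Conversely, consider a finite control system with transition f and output h, and a T-periodic reference output trajectory y_r : ℕ → Fin P. If there exists an initial state x₁ and an infinite input sequence producing an infinite state trajectory x with x(1) = x₁ and h(x(t)) = y_r(t) for all t ≥ 1, then there exists a nonempty family of length-T state trajectories satisfying conditions (C1) and (C2). -/

import Mathlib

theorem stmt_7 {N M P T : ℕ} (hT : 1 ≤ T)
    (f : Fin M → Fin N → Fin N) (h : Fin N → Fin P)
    (yr : ℕ → Fin P) (hper : ∀ t, yr (t + T) = yr t)
    (x₁ : Fin N) (z : ℕ → Fin N)
    (hz1 : z 1 = x₁)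
    (hzout : ∀ t : ℕ, 1 ≤ t → h (z t) = yr t)
    (hzcon : ∀ t : ℕ, 1 ≤ t → ∃ i : Fin M, f i (z t) = z (t + 1)) :
    ∃ (L : Type) (_ : Nonempty L) (xfam : L → Fin T → Fin N),
      (∀ (ℓ : L) (t : Fin T), h (xfam ℓ t) = yr ((t : ℕ) + 1)) ∧
      (∀ (ℓ : L) (t : ℕ) (ht : t + 1 < T),
        ∃ i : Fin M, f i (xfam ℓ ⟨t, by omega⟩) = xfam ℓ ⟨t + 1, ht⟩) ∧
      (∀ ℓ : L, ∃ (ℓ' : L) (i : Fin M),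
        f i (xfam ℓ ⟨T - 1, by omega⟩) = xfam ℓ' ⟨0, hT⟩) := by
  have hper' : ∀ k s : ℕ, yr (k * T + s) = yr s := by
    intro k
    induction k with
    | zero => simp
    | succ k ih =>
      intro s
      have : (k + 1) * T + s = (k * T + s) + T := by ring
      rw [this, hper, ih]
  refine ⟨ℕ, ⟨0⟩, fun k t => z (k * T + (t : ℕ) + 1), ?_, ?_, ?_⟩
  · intro k t
    rw [hzout _ (by omega)]
    have : k * T + (t : ℕ) + 1 = k * T + ((t : ℕ) + 1) := by ring
    rw [this, hper']
  · intro k t ht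
    obtain ⟨i, hi⟩ := hzcon (k * T + t + 1) (by omega)
    exact ⟨i, by
      show f i (z (k * T + t + 1)) = z (k * T + (t + 1) + 1)
      rw [show k * T + (t + 1) + 1 = k * T + t + 1 + 1 by ring]
      exact hi⟩
  · intro k
    obtain ⟨i, hi⟩ := hzcon (k * T + (T - 1) + 1) (by omega)
    refine ⟨k + 1, i, ?_⟩
    have : k * T + (T - 1) + 1 + 1 = (k + 1) * T + 0 + 1 := by
      cases T with
      | zero => omega
      | succ n => ring_nf; omega
    rw [this] at hi
    simpa using hi
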